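/- For every real number a with 0 < a < 1, one has ∫_{−π}^{π} dω / |1 − a − e^{iω}| ≤ 5·log(8/a). -/

import Mathlib

open MeasureTheory Real

lemma normsq_eq (a ω : ℝ) :
    ‖(1 : ℂ) - (a : ℂ) - Complex.exp (Complex.I * (ω : ℂ))‖ ^ 2
      = a ^ 2 + 2 * (1 - a) * (1 - Real.cos ω) := by
  rw [mul_comm, Complex.exp_mul_I, ← Complex.ofReal_cos, ← Complex.ofReal_sin]
  rw [Complex.sq_norm, Complex.normSq_apply]
  simp [Complex.sub_re, Complex.sub_im, Complex.add_re, Complex.add_im,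
    Complex.cos_ofReal_re, Complex.sin_ofReal_re]
  nlinarith [Real.sin_sq_add_cos_sq ω]

lemma norm_ge_a (a ω : ℝ) (ha0 : 0 ≤ a) (ha1 : a < 1) :
    a ≤ ‖(1 : ℂ) - (a : ℂ) - Complex.exp (Complex.I * (ω : ℂ))‖ := by
  have h := normsq_eq a ω
  have hn : (0:ℝ) ≤ ‖(1 : ℂ) - (a : ℂ) - Complex.exp (Complex.I * (ω : ℂ))‖ := norm_nonneg _
  nlinarith [Real.cos_le_one ω]

lemma norm_ge_omega (a ω : ℝ) (ha0 : 0 < a) (ha : a ≤ 1 - π^2/25) (hω : |ω| ≤ π) :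
    2 * |ω| / 5 ≤ ‖(1 : ℂ) - (a : ℂ) - Complex.exp (Complex.I * (ω : ℂ))‖ := by
  have h := normsq_eq a ω
  have hn : (0:ℝ) ≤ ‖(1 : ℂ) - (a : ℂ) - Complex.exp (Complex.I * (ω : ℂ))‖ := norm_nonneg _
  have hc := Real.cos_le_one_sub_mul_cos_sq hω
  have hπ : 0 < π := Real.pi_pos
  have habs : |ω|^2 = ω^2 := sq_abs ω
  have h1 : (2 * |ω| / 5)^2 ≤ ‖(1 : ℂ) - (a : ℂ) - Complex.exp (Complex.I * (ω : ℂ))‖^2 := by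
    have h2 : 2/π^2 * ω^2 ≤ 1 - Real.cos ω := by linarith
    have h3 : π^2/25 ≤ 1 - a := by linarith
    have h4 : 2 * (π^2/25) * (2/π^2 * ω^2) ≤ 2 * (1-a) * (1 - Real.cos ω) := by
      apply mul_le_mul (by nlinarith) h2 (by positivity) (by nlinarith)
    have h5 : 2 * (π^2/25) * (2/π^2 * ω^2) = 4 * ω^2 / 25 := by
      field_simp; ring
    nlinarith
  nlinarith [abs_nonneg ω]

theorem integral_inv_modulus_le (a : ℝ) (ha0 : 0 < a) (ha1 : a < 1) :
    (∫ ω in Set.Icc (-π) π,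
        1 / ‖(1 : ℂ) - (a : ℂ) - Complex.exp (Complex.I * (ω : ℂ))‖)
      ≤ 5 * Real.log (8 / a) := by
  have hπ : 0 < π := Real.pi_pos
  have hπ3 : 3 < π := Real.pi_gt_three
  have hπ4 : π < 4 := by nlinarith [Real.pi_lt_d6]
  set f : ℝ → ℝ := fun ω => 1 / ‖(1 : ℂ) - (a : ℂ) - Complex.exp (Complex.I * (ω : ℂ))‖ with hf
  have hpos : ∀ ω : ℝ, 0 < ‖(1 : ℂ) - (a : ℂ) - Complex.exp (Complex.I * (ω : ℂ))‖ :=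
    fun ω => lt_of_lt_of_le ha0 (norm_ge_a a ω ha0.le ha1)
  have hcont : Continuous f := by
    apply Continuous.div continuous_const
    · exact (continuous_const.sub ((Complex.continuous_exp.comp
        (continuous_const.mul Complex.continuous_ofReal)))).norm
    · exact fun ω => (hpos ω).ne'
  have hint : ∀ c d : ℝ, IntervalIntegrable f volume c d :=
    fun c d => hcont.intervalIntegrable c d
  have hIcc : (∫ ω in Set.Icc (-π) π, f ω) = ∫ ω in (-π)..π, f ω := by
    rw [intervalIntegral.integral_of_le (by linarith), MeasureTheory.integral_Icc_eq_integral_Ioc]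
  have hfle : ∀ ω : ℝ, f ω ≤ 1/a := by
    intro ω
    exact one_div_le_one_div_of_le ha0 (norm_ge_a a ω ha0.le ha1)
  have hlog2 : (0.6931471803:ℝ) < Real.log 2 := Real.log_two_gt_d9
  have hlog8 : Real.log 8 = 3 * Real.log 2 := by
    rw [show (8:ℝ) = 2^3 by norm_num, Real.log_pow]; ring
  have hloga : Real.log a < 0 := Real.log_neg ha0 ha1
  have hlog8a : Real.log (8/a) = Real.log 8 - Real.log a := Real.log_div (by norm_num) ha0.ne'
  show (∫ ω in Set.Icc (-π) π, f ω) ≤ 5 * Real.log (8 / a)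
  rw [hIcc]
  by_cases hca : 1 - π^2/25 < a
  · -- case: a large
    have h1 : (∫ ω in (-π)..π, f ω) ≤ ∫ ω in (-π)..π, (1/a) := by
      apply intervalIntegral.integral_mono_on (by linarith) (hint _ _)
        intervalIntegrable_const
      intro x _; exact hfle x
    have h2 : (∫ ω in (-π)..π, (1/a : ℝ)) = 2 * π * (1/a) := by
      rw [intervalIntegral.integral_const, smul_eq_mul]; ring
    rw [h2] at h1
    refine h1.trans ?_
    have hp1 : π < 3.141593 := Real.pi_lt_d6
    have hp2 : 3.141592 < π := Real.pi_gt_d6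
    have hden : (0:ℝ) < 1 - π^2/25 := by nlinarith
    have h3 : 2 * π * (1/a) ≤ 2 * π / (1 - π^2/25) := by
      rw [mul_one_div]
      exact div_le_div_of_nonneg_left (by positivity) hden (le_of_lt hca)
    refine h3.trans ?_
    have h4 : 5 * (3 * 0.6931471803) ≤ (5:ℝ) * Real.log (8/a) := by
      rw [hlog8a, hlog8]; nlinarith
    refine le_trans ?_ h4
    rw [div_le_iff₀ hden]
    nlinarith
  · -- case: a small
    push_neg at hca
    have haπ : a < π := by linarith
    have hsplit : (∫ ω in (-π)..π, f ω) =
        (∫ ω in (-π)..(-a), f ω) + (∫ ω in (-a)..a, f ω) + (∫ ω in a..π, f ω) := by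
      rw [intervalIntegral.integral_add_adjacent_intervals (hint _ _) (hint _ _),
        intervalIntegral.integral_add_adjacent_intervals (hint _ _) (hint _ _)]
    rw [hsplit]
    have hmid : (∫ ω in (-a)..a, f ω) ≤ 2 := by
      have h1 : (∫ ω in (-a)..a, f ω) ≤ ∫ ω in (-a)..a, (1/a) := by
        apply intervalIntegral.integral_mono_on (by linarith) (hint _ _)
          intervalIntegrable_const
        intro x _; exact hfle x
      refine h1.trans ?_
      rw [intervalIntegral.integral_const, smul_eq_mul,
        show a - -a = 2*a by ring, mul_one_div, mul_div_assoc, div_self ha0.ne']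
      norm_num
    have hright : (∫ ω in a..π, f ω) ≤ (5/2) * Real.log (π/a) := by
      have hb : ∀ x ∈ Set.Icc a π, f x ≤ 5/2 * (1/x) := by
        intro x hx
        have hx0 : 0 < x := lt_of_lt_of_le ha0 hx.1
        have hge := norm_ge_omega a x ha0 hca (by rw [abs_of_pos hx0]; exact hx.2)
        rw [abs_of_pos hx0] at hge
        have h5 : f x ≤ 1/(2*x/5) :=
          one_div_le_one_div_of_le (by positivity) hge
        refine h5.trans (le_of_eq ?_)
        field_simp
      have hig : IntervalIntegrable (fun x => 5/2 * (1/x)) volume a π := by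
        apply ContinuousOn.intervalIntegrable
        apply ContinuousOn.mul continuousOn_const
        apply ContinuousOn.div continuousOn_const continuousOn_id
        intro x hx
        rw [Set.uIcc_of_le (le_of_lt haπ)] at hx
        exact (lt_of_lt_of_le ha0 hx.1).ne'
      have h1 := intervalIntegral.integral_mono_on (le_of_lt haπ) (hint _ _) hig hb
      refine h1.trans ?_
      rw [intervalIntegral.integral_const_mul, integral_one_div]
      rw [Set.uIcc_of_le (le_of_lt haπ)]
      intro h; exact absurd h.1 (by linarith)
    have hleft : (∫ ω in (-π)..(-a), f ω) ≤ (5/2) * Real.log (π/a) := by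
      have hb : ∀ x ∈ Set.Icc (-π) (-a), f x ≤ 5/2 * (1/(-x)) := by
        intro x hx
        have hx0 : x < 0 := lt_of_le_of_lt hx.2 (by linarith)
        have hge := norm_ge_omega a x ha0 hca (by rw [abs_of_neg hx0]; linarith [hx.1])
        rw [abs_of_neg hx0] at hge
        have h5 : f x ≤ 1/(2*(-x)/5) :=
          one_div_le_one_div_of_le (by linarith) hge
        refine h5.trans (le_of_eq ?_)
        have hxne : -x ≠ 0 := (by linarith : (0:ℝ) < -x).ne'
        field_simp
      have hig : IntervalIntegrable (fun x => 5/2 * (1/(-x))) volume (-π) (-a) := by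
        apply ContinuousOn.intervalIntegrable
        apply ContinuousOn.mul continuousOn_const
        apply ContinuousOn.div continuousOn_const continuousOn_id.neg
        intro x hx
        rw [Set.uIcc_of_le (by linarith : -π ≤ -a)] at hx
        have hx0 : x < 0 := lt_of_le_of_lt hx.2 (by linarith)
        show -x ≠ 0
        intro h
        rw [neg_eq_zero] at h
        exact hx0.ne h
      have h1 := intervalIntegral.integral_mono_on (by linarith : -π ≤ -a) (hint _ _) hig hb
      refine h1.trans ?_
      have hcn : (∫ x in (-π)..(-a), 5/2 * (1/(-x))) = ∫ x in a..π, 5/2 * (1/x) := by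
        have h2 := intervalIntegral.integral_comp_neg (a := -π) (b := -a)
          (fun x => 5/2 * (1/x))
        simpa using h2
      rw [hcn, intervalIntegral.integral_const_mul, integral_one_div]
      rw [Set.uIcc_of_le (le_of_lt haπ)]
      intro h; exact absurd h.1 (by linarith)
    have hlogπa : Real.log (π/a) = Real.log π - Real.log a := Real.log_div hπ.ne' ha0.ne'
    have hlogπ : Real.log π < Real.log 4 := Real.log_lt_log hπ hπ4
    have hlog4 : Real.log 4 = 2 * Real.log 2 := by
      rw [show (4:ℝ) = 2^2 by norm_num, Real.log_pow]; ring
    rw [hlog8a, hlog8]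
    rw [hlogπa] at hright hleft
    nlinarith [hmid, hright, hleft]
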